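/- Let d ≥ 2, ω ∈ ℝ^d, and define N̄ : ℝ^d → ℝ by N̄(r) = Σ_{i=1}^{d−1} (ω_i + r_d^i) r_i + ω_d r_d. If γ ∈ ℝ^d and there exists ε > 0 such that ⟨∇N̄(r), γ⟩ = 0 for all r ∈ ℝ^d with ‖r‖ < ε, then γ = 0 (i.e. N̄ is Rüssmann non-degenerate). -/

import Mathlib

open Real Filter Set

noncomputable section

/-- Embedding of the first `d − 1` indices into `Fin d`. -/
def emb (d : ℕ) : Fin (d - 1) → Fin d := Fin.castLE (Nat.sub_le d 1)

/-- The last index of `Fin d`. -/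
def lst (d : ℕ) (hd : 0 < d) : Fin d := ⟨d - 1, Nat.sub_lt hd Nat.one_pos⟩

/-- `N̄(r) = Σ_{i=1}^{d−1} (ω_i + r_d^i) r_i + ω_d r_d`. -/
def Nbar (d : ℕ) (hd : 0 < d) (ω : Fin d → ℝ) (r : Fin d → ℝ) : ℝ :=
  (∑ i : Fin (d - 1), (ω (emb d i) + r (lst d hd) ^ ((i : ℕ) + 1)) * r (emb d i)) +
    ω (lst d hd) * r (lst d hd)

abbrev pr (d : ℕ) (i : Fin d) : (Fin d → ℝ) →L[ℝ] ℝ := ContinuousLinearMap.proj i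

lemma hasFDerivAt_Nbar (d : ℕ) (hd : 0 < d) (ω : Fin d → ℝ) (r : Fin d → ℝ) :
    HasFDerivAt (Nbar d hd ω)
      ((∑ i : Fin (d - 1),
          ((ω (emb d i) + r (lst d hd) ^ ((i : ℕ) + 1)) • pr d (emb d i)
           + r (emb d i) • (((((i : ℕ) + 1 : ℕ) : ℝ) * r (lst d hd) ^ (((i : ℕ) + 1) - 1)) • pr d (lst d hd))))
        + ω (lst d hd) • pr d (lst d hd)) r := by
  unfold Nbar
  apply HasFDerivAt.add
  · apply HasFDerivAt.fun_sum
    intro i _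
    have hL : HasFDerivAt (fun r : Fin d → ℝ => r (lst d hd)) (pr d (lst d hd)) r :=
      (pr d (lst d hd)).hasFDerivAt
    have hP : HasFDerivAt (fun r : Fin d → ℝ => r (emb d i)) (pr d (emb d i)) r :=
      (pr d (emb d i)).hasFDerivAt
    have hpow : HasFDerivAt (fun r : Fin d → ℝ => r (lst d hd) ^ ((i : ℕ) + 1))
        (((((i : ℕ) + 1 : ℕ) : ℝ) * r (lst d hd) ^ (((i : ℕ) + 1) - 1)) • pr d (lst d hd)) r :=
      by have := (hasDerivAt_pow ((i : ℕ) + 1) (r (lst d hd))).comp_hasFDerivAt r hL; exact this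
    exact (hpow.const_add (ω (emb d i))).mul hP
  · exact ((pr d (lst d hd)).hasFDerivAt).const_mul (ω (lst d hd))

lemma fderiv_Nbar_apply (d : ℕ) (hd : 0 < d) (ω : Fin d → ℝ) (r γ : Fin d → ℝ) :
    fderiv ℝ (Nbar d hd ω) r γ =
      (∑ i : Fin (d - 1),
        ((ω (emb d i) + r (lst d hd) ^ ((i : ℕ) + 1)) * γ (emb d i)
          + r (emb d i) * ((((i : ℕ) + 1 : ℝ) * r (lst d hd) ^ (i : ℕ)) * γ (lst d hd))))
        + ω (lst d hd) * γ (lst d hd) := by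
  rw [(hasFDerivAt_Nbar d hd ω r).fderiv]
  simp [ContinuousLinearMap.sum_apply]

/-- `N̄` is Rüssmann non-degenerate: if `⟨∇N̄(r), γ⟩ = 0` for all
`r` with `‖r‖ < ε` (for some `ε > 0`), then `γ = 0`.  Here `⟨∇N̄(r), γ⟩` is the
directional derivative of `N̄` at `r` in the direction `γ`. -/
theorem statement19 (d : ℕ) (hd : 2 ≤ d) (ω : Fin d → ℝ) (γ : Fin d → ℝ)
    (h : ∃ ε : ℝ, 0 < ε ∧ ∀ r : Fin d → ℝ, ‖r‖ < ε →
      fderiv ℝ (Nbar d (by omega) ω) r γ = 0) :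
    γ = 0 := by
  obtain ⟨ε, hε, h⟩ := h
  have hd' : 0 < d := by omega
  set L := lst d hd' with hLdef
  have key : ∀ r : Fin d → ℝ, ‖r‖ < ε →
      (∑ i : Fin (d - 1),
        ((ω (emb d i) + r L ^ ((i : ℕ) + 1)) * γ (emb d i)
          + r (emb d i) * ((((i : ℕ) + 1 : ℝ) * r L ^ (i : ℕ)) * γ L)))
        + ω L * γ L = 0 := by
    intro r hr
    rw [← fderiv_Nbar_apply d hd' ω r γ]
    exact h r hr
  have hne : ∀ i : Fin (d - 1), emb d i ≠ L := by
    intro i hcontra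
    have := congrArg Fin.val hcontra
    simp only [emb, hLdef, lst, Fin.coe_castLE] at this
    omega
  -- Step 1: the coordinates γ (emb d i) vanish
  set C0 : ℝ := (∑ i : Fin (d - 1), ω (emb d i) * γ (emb d i)) + ω L * γ L with hC0
  set p : Polynomial ℝ :=
    Polynomial.C C0 + ∑ i : Fin (d - 1), Polynomial.C (γ (emb d i)) * Polynomial.X ^ ((i : ℕ) + 1)
    with hp
  have hroot : ∀ t ∈ Set.Ioo (-ε) ε, p.IsRoot t := by
    intro t ht
    have hnorm : ‖(Pi.single L t : Fin d → ℝ)‖ < ε := by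
      rw [Pi.norm_single, Real.norm_eq_abs, abs_lt]
      exact ⟨ht.1, ht.2⟩
    have h1 := key (Pi.single L t) hnorm
    have hsing : ∀ i : Fin (d - 1), (Pi.single L t : Fin d → ℝ) (emb d i) = 0 := by
      intro i; simp [Pi.single_apply, hne i]
    rw [Pi.single_eq_same] at h1
    simp only [hsing, zero_mul, add_zero] at h1
    have heval : p.eval t =
        (∑ i : Fin (d - 1), (ω (emb d i) + t ^ ((i : ℕ) + 1)) * γ (emb d i)) + ω L * γ L := by
      simp only [hp, hC0, Polynomial.eval_add, Polynomial.eval_C, Polynomial.eval_finset_sum,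
        Polynomial.eval_mul, Polynomial.eval_pow, Polynomial.eval_X]
      rw [show (∑ i : Fin (d - 1), (ω (emb d i) + t ^ ((i : ℕ) + 1)) * γ (emb d i))
          = ∑ i : Fin (d - 1), (ω (emb d i) * γ (emb d i) + γ (emb d i) * t ^ ((i : ℕ) + 1))
        from Finset.sum_congr rfl (fun i _ => by ring), Finset.sum_add_distrib]
      ring
    rw [Polynomial.IsRoot, heval, h1]
  have hp0 : p = 0 :=
    p.eq_zero_of_infinite_isRoot ((Set.Ioo_infinite (by linarith : -ε < ε)).mono hroot)
  have hγ : ∀ i : Fin (d - 1), γ (emb d i) = 0 := by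
    intro i
    have hc : p.coeff ((i : ℕ) + 1) = γ (emb d i) := by
      simp only [hp, Polynomial.coeff_add, Polynomial.coeff_C, Polynomial.finset_sum_coeff,
        Polynomial.coeff_C_mul_X_pow]
      rw [if_neg (Nat.succ_ne_zero _), zero_add]
      rw [Finset.sum_eq_single i]
      · simp
      · intro j _ hj
        rw [if_neg]
        intro hcontra
        exact hj (by
          apply Fin.ext
          omega)
      · intro hnot; exact absurd (Finset.mem_univ i) hnot
    rw [hp0] at hc
    simpa using hc.symm
  -- Step 2: γ L = 0
  have hd1 : 0 < d - 1 := by omega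
  set i0 : Fin (d - 1) := ⟨0, hd1⟩ with hi0
  have hγL : γ L = 0 := by
    have ev : ∀ s : ℝ, |s| < ε → s * γ L + ω L * γ L = 0 := by
      intro s hs
      have hnorm : ‖(Pi.single (emb d i0) s : Fin d → ℝ)‖ < ε := by
        rw [Pi.norm_single, Real.norm_eq_abs]; exact hs
      have h1 := key (Pi.single (emb d i0) s) hnorm
      have hLz : (Pi.single (emb d i0) s : Fin d → ℝ) L = 0 := by
        simp [Pi.single_apply, (hne i0).symm]
      rw [hLz] at h1
      have hsum : (∑ i : Fin (d - 1),
          ((ω (emb d i) + (0 : ℝ) ^ ((i : ℕ) + 1)) * γ (emb d i)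
            + (Pi.single (emb d i0) s : Fin d → ℝ) (emb d i)
              * ((((i : ℕ) + 1 : ℝ) * (0 : ℝ) ^ (i : ℕ)) * γ L)))
          = s * γ L := by
        rw [Finset.sum_eq_single i0]
        · simp [hγ, hi0]
        · intro j _ hj
          have hne2 : emb d j ≠ emb d i0 := by
            intro hcontra
            exact hj (by
              apply Fin.ext
              have := Fin.ext_iff.mp hcontra
              simpa [emb] using this)
          rw [hγ j, Pi.single_eq_of_ne hne2]
          ring
        · intro hnot; exact absurd (Finset.mem_univ i0) hnot
      rw [hsum] at h1
      exact h1
    have h0 := ev 0 (by simpa using hε)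
    have h2 := ev (ε / 2) (by rw [abs_of_pos (by linarith)]; linarith)
    have hh : (ε / 2) * γ L = 0 := by linarith
    rcases mul_eq_zero.mp hh with h | h
    · linarith
    · exact h
  funext j
  by_cases hj : (j : ℕ) < d - 1
  · have : emb d ⟨(j : ℕ), hj⟩ = j := by
      apply Fin.ext; simp [emb]
    rw [Pi.zero_apply, ← this, hγ]
  · have : j = L := by
      apply Fin.ext
      simp only [hLdef, lst]
      have := j.isLt
      omega
    rw [Pi.zero_apply, this, hγL]
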